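/- There is a constant c > 0 depending only on n with the following property. For every axis-parallel spacetime cube Q of sidelength 1, there exists a red wave φ of frequency 1 with M(φ) = 1 such that |φ(t,x)| ≥ c for every (t,x) ∈ Q. (That is, a red wave of frequency 1 and unit mass can concentrate on any given unit cube of spacetime.) -/

import Mathlib

open MeasureTheory Real Set
open scoped RealInnerProductSpace

noncomputable section

abbrev Spc (n : ℕ) := EuclideanSpace ℝ (Fin n)

/-- The first standard basis vector of ℝⁿ. -/
def e1 (n : ℕ) : Spc n :=
  (EuclideanSpace.equiv (Fin n) ℝ).symm (fun i => if (i : ℕ) = 0 then 1 else 0)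

/-- Frequency support region for red waves of frequency 1. -/
def redSet (n : ℕ) : Set (Spc n) :=
  {ξ | 1 ≤ ‖ξ‖ ∧ ‖ξ‖ ≤ 2 ∧ (inner ℝ ξ (e1 n) : ℝ) ≥ ‖ξ‖ * Real.cos (π / 8)}

/-- Frequency support region for blue waves of frequency 2^k. -/
def blueSet (n k : ℕ) : Set (Spc n) :=
  {ξ | (2 : ℝ) ^ k ≤ ‖ξ‖ ∧ ‖ξ‖ ≤ 2 ^ (k + 1) ∧ (inner ℝ ξ (e1 n) : ℝ) ≥ ‖ξ‖ * Real.cos (π / 8)}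

/-- The wave with Fourier data `fp` on the upper cone and `fm` on the lower cone. -/
def wave (n : ℕ) (fp fm : Spc n → ℂ) : ℝ × Spc n → ℂ := fun p =>
  (∫ ξ : Spc n, fp ξ * Complex.exp (2 * π * Complex.I * ((p.1 * ‖ξ‖ + (inner ℝ p.2 ξ : ℝ) : ℝ) : ℂ))) +
  (∫ ξ : Spc n, fm ξ * Complex.exp (2 * π * Complex.I * ((-(p.1 * ‖ξ‖) + (inner ℝ p.2 ξ : ℝ) : ℝ) : ℂ)))

/-- The mass of a wave with data `(fp, fm)`. -/
def mass (n : ℕ) (fp fm : Spc n → ℂ) : ℝ :=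
  (∫ ξ : Spc n, ‖fp ξ‖ ^ 2) + (∫ ξ : Spc n, ‖fm ξ‖ ^ 2)

/-- `fp` is admissible data for a red wave of frequency 1. -/
def IsRedData (n : ℕ) (fp : Spc n → ℂ) : Prop :=
  Integrable fp ∧ MemLp fp 2 ∧ ∀ ξ, ξ ∉ redSet n → fp ξ = 0

/-- `fm` is admissible data for a blue wave of frequency `2^k`. -/
def IsBlueData (n k : ℕ) (fm : Spc n → ℂ) : Prop :=
  Integrable fm ∧ MemLp fm 2 ∧ ∀ ξ, ξ ∉ blueSet n k → fm ξ = 0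

/-- Axis-parallel spacetime cube of sidelength `R` centred at `(t₀, x₀)`. -/
def cube (n : ℕ) (t₀ : ℝ) (x₀ : Spc n) (R : ℝ) : Set (ℝ × Spc n) :=
  {p | |p.1 - t₀| ≤ R / 2 ∧ ∀ i, |p.2 i - x₀ i| ≤ R / 2}

/-- `ω` is an admissible tube direction. -/
def IsDir (n : ℕ) (ω : Spc n) : Prop :=
  ‖ω‖ = 1 ∧ (inner ℝ ω (e1 n) : ℝ) ≥ Real.cos (π / 8)

/-- The `1 × 2^k` tube in direction `(1, ω)`. -/
def tube (n : ℕ) (t₀ : ℝ) (x₀ ω : Spc n) (k : ℕ) : Set (ℝ × Spc n) :=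
  {p | |p.1 - t₀| ≤ 2 ^ k ∧ ‖p.2 - x₀ - (p.1 - t₀) • ω‖ ≤ 1}

/-- The infinite tube of radius `r` in direction `(1, ω)`. -/
def tubeR (n : ℕ) (t₀ : ℝ) (x₀ ω : Spc n) (r : ℝ) : Set (ℝ × Spc n) :=
  {p | ‖p.2 - x₀ - (p.1 - t₀) • ω‖ ≤ r}

/-- The infinite tube in direction `(1, ω)`. -/
def infTube (n : ℕ) (t₀ : ℝ) (x₀ ω : Spc n) : Set (ℝ × Spc n) :=
  tubeR n t₀ x₀ ω 1

/-- Euclidean distance on spacetime `ℝ^{1+n}`. -/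
def edist1n (n : ℕ) (p q : ℝ × Spc n) : ℝ :=
  Real.sqrt ((p.1 - q.1) ^ 2 + ‖p.2 - q.2‖ ^ 2)

/-- Euclidean distance from a point to a set in spacetime. -/
def distToSet (n : ℕ) (p : ℝ × Spc n) (S : Set (ℝ × Spc n)) : ℝ :=
  ⨅ q : S, edist1n n p (q : ℝ × Spc n)

/-- The margin of a red wave of frequency 1 with data `fp`. -/
def margin (n : ℕ) (fp : Spc n → ℂ) : ℝ :=
  ⨅ ξ : Function.support fp, ⨅ ζ : {ζ : Spc n // ζ ∉ redSet n},
    edist1n n (‖(ξ : Spc n)‖, (ξ : Spc n)) (‖(ζ : Spc n)‖, (ζ : Spc n))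

/-- `sup {‖φ(t,x)‖ : (t,x) ∈ Ω}`, with the convention `sup ∅ = 0`. -/
def supOn (n : ℕ) (φ : ℝ × Spc n → ℂ) (Ω : Set (ℝ × Spc n)) (t : ℝ) : ℝ :=
  sSup {r | ∃ x : Spc n, (t, x) ∈ Ω ∧ r = ‖φ (t, x)‖}

-- auxiliary lemmas

lemma cos_pi_div_eight_le : Real.cos (π/8) ≤ 0.93 := by
  rw [Real.cos_pi_div_eight]
  have h2 : Real.sqrt 2 ≤ 1.45 := by
    nlinarith [Real.sq_sqrt (by norm_num : (0:ℝ) ≤ 2), Real.sqrt_nonneg 2]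
  have h3 : Real.sqrt (2 + Real.sqrt 2) ≤ 1.86 := by
    nlinarith [Real.sq_sqrt (show (0:ℝ) ≤ 2 + Real.sqrt 2 by positivity),
      Real.sqrt_nonneg (2 + Real.sqrt 2)]
  linarith

lemma e1_eq (n : ℕ) (hn : 0 < n) : e1 n = EuclideanSpace.single (⟨0, hn⟩ : Fin n) (1:ℝ) := by
  ext i
  simp [e1, EuclideanSpace.single_apply, Fin.ext_iff]

lemma norm_e1 (n : ℕ) (hn : 0 < n) : ‖e1 n‖ = 1 := by
  rw [e1_eq n hn, EuclideanSpace.norm_single]; norm_num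


set_option maxHeartbeats 1000000 in
/-- A red wave of frequency 1 and unit mass can concentrate on any given unit cube. -/
theorem red_wave_concentrates_on_cube (n : ℕ) (hn : 2 ≤ n) :
    ∃ c : ℝ, 0 < c ∧ ∀ (t₀ : ℝ) (x₀ : Spc n),
      ∃ fp : Spc n → ℂ, IsRedData n fp ∧ mass n fp 0 = 1 ∧
        ∀ p ∈ cube n t₀ x₀ 1, c ≤ ‖wave n fp 0 p‖ := by
  classical
  have hn0 : (0:ℝ) < n := by exact_mod_cast Nat.lt_of_lt_of_le (by norm_num) hn
  set δ : ℝ := 1/(100*n) with hδdef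
  have hδpos : 0 < δ := by positivity
  have hδle : δ ≤ 1/200 := by
    rw [hδdef]
    rw [div_le_div_iff₀ (by positivity) (by norm_num)]
    have : (2:ℝ) ≤ n := by exact_mod_cast hn
    nlinarith
  set ξ₀ : Spc n := (3/2 : ℝ) • e1 n with hξ₀def
  have hnormξ₀ : ‖ξ₀‖ = 3/2 := by
    rw [hξ₀def, norm_smul, norm_e1 n (by omega)]
    simp
  set B : Set (Spc n) := Metric.closedBall ξ₀ δ with hBdef
  have hBmeas : MeasurableSet B := measurableSet_closedBall
  have hBcompact : IsCompact B := isCompact_closedBall _ _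
  have hVfin : volume B < ⊤ := hBcompact.measure_lt_top
  have hVpos' : 0 < volume B := Metric.measure_closedBall_pos volume ξ₀ hδpos
  set V : ℝ := (volume B).toReal with hVdef
  have hVpos : 0 < V := ENNReal.toReal_pos hVpos'.ne' hVfin.ne
  set c₀ : ℝ := (Real.sqrt V)⁻¹ with hc₀def
  have hc₀pos : 0 < c₀ := by positivity
  -- B ⊆ redSet
  have hsub : B ⊆ redSet n := by
    intro ξ hξ
    have hd : ‖ξ - ξ₀‖ ≤ δ := by
      rw [hBdef, Metric.mem_closedBall, dist_eq_norm] at hξ; exact hξ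
    have hnl : |‖ξ‖ - ‖ξ₀‖| ≤ δ := le_trans (abs_norm_sub_norm_le _ _) hd
    rw [hnormξ₀] at hnl
    have h1 : 3/2 - δ ≤ ‖ξ‖ := by cases abs_le.1 hnl; linarith
    have h2 : ‖ξ‖ ≤ 3/2 + δ := by cases abs_le.1 hnl; linarith
    have hinner₀ : (inner ℝ ξ₀ (e1 n) : ℝ) = 3/2 := by
      rw [hξ₀def, real_inner_smul_left, real_inner_self_eq_norm_sq, norm_e1 n (by omega)]
      norm_num
    have hCS : |(inner ℝ (ξ - ξ₀) (e1 n) : ℝ)| ≤ δ := by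
      calc |(inner ℝ (ξ - ξ₀) (e1 n) : ℝ)| ≤ ‖ξ - ξ₀‖ * ‖e1 n‖ := abs_real_inner_le_norm _ _
        _ ≤ δ := by rw [norm_e1 n (by omega)]; simpa using hd
    have hinner : (inner ℝ ξ (e1 n) : ℝ) ≥ 3/2 - δ := by
      have : (inner ℝ ξ (e1 n) : ℝ) = inner ℝ ξ₀ (e1 n) + (inner ℝ (ξ - ξ₀) (e1 n) : ℝ) := by
        rw [← inner_add_left]; congr 1; abel
      rw [this, hinner₀]
      cases abs_le.1 hCS; linarith
    have hcos := cos_pi_div_eight_le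
    have hpi := Real.pi_pos
    have hcosnn : 0 ≤ Real.cos (π/8) := Real.cos_nonneg_of_mem_Icc
      ⟨by linarith, by linarith⟩
    refine ⟨by linarith, by linarith, ?_⟩
    have hub : ‖ξ‖ * Real.cos (π/8) ≤ (3/2 + δ) * 0.93 :=
      mul_le_mul h2 hcos hcosnn (by linarith)
    calc ‖ξ‖ * Real.cos (π/8) ≤ (3/2 + δ) * 0.93 := hub
      _ ≤ 3/2 - δ := by nlinarith
      _ ≤ (inner ℝ ξ (e1 n) : ℝ) := hinner
  -- the wave data
  refine ⟨Real.sqrt V / 2, by positivity, ?_⟩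
  intro t₀ x₀
  set b : Spc n → ℝ := fun ξ => t₀ * ‖ξ‖ + (inner ℝ x₀ ξ : ℝ) with hb
  set g : Spc n → ℂ := fun ξ =>
    (c₀ : ℂ) * Complex.exp (((-(2*π*(b ξ)) : ℝ) : ℂ) * Complex.I) with hg
  have hbcont : Continuous b := by
    rw [hb]
    exact (continuous_const.mul continuous_norm).add (continuous_const.inner continuous_id)
  have hgcont : Continuous g := by
    rw [hg]
    exact continuous_const.mul (Complex.continuous_exp.comp
      ((Complex.continuous_ofReal.comp (continuous_const.mul hbcont).neg).mul continuous_const))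
  set fp : Spc n → ℂ := B.indicator g with hfp
  have hnormg : ∀ ξ, ‖g ξ‖ = c₀ := by
    intro ξ
    rw [hg]
    simp only [norm_mul, Complex.norm_exp_ofReal_mul_I, mul_one, Complex.norm_real,
      Real.norm_eq_abs]
    exact abs_of_pos hc₀pos
  have hfpint : Integrable fp :=
    (ContinuousOn.integrableOn_compact hBcompact hgcont.continuousOn).integrable_indicator hBmeas
  have hfpnormsq : ∀ ξ, ‖fp ξ‖^2 = B.indicator (fun _ => c₀^2) ξ := by
    intro ξ
    by_cases h : ξ ∈ B <;> simp [hfp, h, hnormg]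
  have hsqint : Integrable (fun ξ => ‖fp ξ‖^2) := by
    simp only [hfpnormsq]
    exact (integrable_indicator_iff hBmeas).2 (integrableOn_const hVfin.ne)
  have hmem2 : MemLp fp 2 :=
    (memLp_two_iff_integrable_sq_norm hfpint.aestronglyMeasurable).2 hsqint
  have hsupp : ∀ ξ, ξ ∉ redSet n → fp ξ = 0 := by
    intro ξ hξ
    have : ξ ∉ B := fun h => hξ (hsub h)
    simp [hfp, this]
  have hmass : mass n fp 0 = 1 := by
    rw [mass]
    have h0 : (∫ ξ : Spc n, ‖(0 : Spc n → ℂ) ξ‖ ^ 2) = 0 := by simp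
    rw [h0, add_zero]
    have h1 : (∫ ξ : Spc n, ‖fp ξ‖ ^ 2) = V * c₀^2 := by
      simp only [hfpnormsq]
      rw [integral_indicator_const _ hBmeas]
      simp [smul_eq_mul, hVdef]
      exact Or.inl rfl
    rw [h1, hc₀def, inv_pow, Real.sq_sqrt hVpos.le]
    field_simp
  refine ⟨fp, ⟨hfpint, hmem2, hsupp⟩, hmass, ?_⟩
  rintro ⟨t, x⟩ hp
  obtain ⟨hpt, hpx⟩ := hp
  simp only at hpt hpx
  set a : Spc n → ℝ := fun ξ => t * ‖ξ‖ + (inner ℝ x ξ : ℝ) with ha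
  set μ₁ : ℝ := 2*π*((t - t₀) * ‖ξ₀‖ + (inner ℝ (x - x₀) ξ₀ : ℝ)) with hμ₁
  set G : Spc n → ℂ := fun ξ =>
    (c₀ : ℂ) * Complex.exp (((2*π*(a ξ - b ξ) - μ₁ : ℝ) : ℂ) * Complex.I) with hG
  have hW : wave n fp 0 (t, x) = ∫ ξ, fp ξ * Complex.exp (2*π*Complex.I*((a ξ : ℝ):ℂ)) := by
    simp only [wave, Pi.zero_apply, zero_mul, integral_zero, add_zero, ha]
  have hFeq : (fun ξ => Complex.exp (((-μ₁ : ℝ):ℂ) * Complex.I) *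
      (fp ξ * Complex.exp (2*π*Complex.I*((a ξ : ℝ):ℂ)))) = B.indicator G := by
    funext ξ
    by_cases h : ξ ∈ B
    · simp only [hfp, indicator_of_mem h, hg, hG]
      have key : Complex.exp (((-μ₁:ℝ):ℂ)*Complex.I) *
          Complex.exp (((-(2*π*(b ξ)):ℝ):ℂ)*Complex.I) *
          Complex.exp (2*π*Complex.I*((a ξ:ℝ):ℂ)) =
          Complex.exp (((2*π*(a ξ - b ξ) - μ₁ : ℝ):ℂ)*Complex.I) := by
        rw [← Complex.exp_add, ← Complex.exp_add]
        congr 1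
        push_cast
        ring
      linear_combination (c₀:ℂ) * key
    · simp [hfp, indicator_of_notMem h, h]
  have hx2 : ‖x - x₀‖ ≤ (n:ℝ)/2 := by
    rw [EuclideanSpace.norm_eq]
    have hsum : (∑ i, ‖(x - x₀) i‖^2) ≤ (n:ℝ)/4 := by
      have hco : ∀ i : Fin n, ‖(x - x₀) i‖^2 ≤ 1/4 := by
        intro i
        have h := hpx i
        rw [PiLp.sub_apply, Real.norm_eq_abs]
        nlinarith [abs_nonneg (x i - x₀ i), h]
      calc (∑ i, ‖(x - x₀) i‖^2) ≤ ∑ _i : Fin n, (1/4:ℝ) :=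
            Finset.sum_le_sum (fun i _ => hco i)
        _ = (n:ℝ)/4 := by simp; ring
    calc Real.sqrt (∑ i, ‖(x - x₀) i‖^2) ≤ Real.sqrt (((n:ℝ)/2)^2) := by
          apply Real.sqrt_le_sqrt
          have h1 : (1:ℝ) ≤ n := by exact_mod_cast Nat.one_le_of_lt hn
          nlinarith [hsum]
      _ = (n:ℝ)/2 := Real.sqrt_sq (by positivity)
  have hθ : ∀ ξ ∈ B, |2*π*(a ξ - b ξ) - μ₁| ≤ π/3 := by
    intro ξ hξ
    have hd : ‖ξ - ξ₀‖ ≤ δ := by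
      rw [hBdef, Metric.mem_closedBall, dist_eq_norm] at hξ; exact hξ
    have hπ := Real.pi_pos
    have hid : 2*π*(a ξ - b ξ) - μ₁ =
        2*π*((t - t₀)*(‖ξ‖ - ‖ξ₀‖) + (inner ℝ (x - x₀) (ξ - ξ₀) : ℝ)) := by
      simp only [ha, hb, hμ₁, inner_sub_left, inner_sub_right]
      ring
    have h1 : |‖ξ‖ - ‖ξ₀‖| ≤ δ := le_trans (abs_norm_sub_norm_le _ _) hd
    have h2 : |(inner ℝ (x - x₀) (ξ - ξ₀) : ℝ)| ≤ ((n:ℝ)/2) * δ := by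
      calc |(inner ℝ (x - x₀) (ξ - ξ₀) : ℝ)| ≤ ‖x - x₀‖ * ‖ξ - ξ₀‖ := abs_real_inner_le_norm _ _
        _ ≤ ((n:ℝ)/2) * δ := mul_le_mul hx2 hd (norm_nonneg _) (by positivity)
    have hterm : |(t - t₀)*(‖ξ‖ - ‖ξ₀‖) + (inner ℝ (x - x₀) (ξ - ξ₀) : ℝ)| ≤
        (1/2)*δ + ((n:ℝ)/2)*δ := by
      calc |(t - t₀)*(‖ξ‖ - ‖ξ₀‖) + (inner ℝ (x - x₀) (ξ - ξ₀) : ℝ)| ≤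
            |(t - t₀)*(‖ξ‖ - ‖ξ₀‖)| + |(inner ℝ (x - x₀) (ξ - ξ₀) : ℝ)| := abs_add_le _ _
        _ ≤ (1/2)*δ + ((n:ℝ)/2)*δ := by
            have := mul_le_mul hpt h1 (abs_nonneg _) (by norm_num)
            rw [abs_mul] at *
            linarith
    have hδn : (1/2)*δ + ((n:ℝ)/2)*δ ≤ 1/6 := by
      have h1 : (2:ℝ) ≤ n := by exact_mod_cast hn
      have hu : δ * (100*(n:ℝ)) = 1 := by
        rw [hδdef]; field_simp
      nlinarith [hu, hδle, hδpos]
    calc |2*π*(a ξ - b ξ) - μ₁| =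
          2*π*|(t - t₀)*(‖ξ‖ - ‖ξ₀‖) + (inner ℝ (x - x₀) (ξ - ξ₀) : ℝ)| := by
          rw [hid, abs_mul, abs_of_pos (by positivity : (0:ℝ) < 2*π)]
      _ ≤ 2*π*(1/6) := by nlinarith [hterm, hπ]
      _ ≤ π/3 := by linarith
  have hcosb : ∀ ξ ∈ B, (1:ℝ)/2 ≤ Real.cos (2*π*(a ξ - b ξ) - μ₁) := by
    intro ξ hξ
    have h := hθ ξ hξ
    have hπ := Real.pi_pos
    calc (1:ℝ)/2 = Real.cos (π/3) := Real.cos_pi_div_three.symm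
      _ ≤ Real.cos |2*π*(a ξ - b ξ) - μ₁| :=
          Real.cos_le_cos_of_nonneg_of_le_pi (abs_nonneg _) (by linarith) h
      _ = Real.cos (2*π*(a ξ - b ξ) - μ₁) := Real.cos_abs _
  have hGcont : Continuous G := by
    rw [hG]
    apply continuous_const.mul
    apply Complex.continuous_exp.comp
    apply Continuous.mul _ continuous_const
    apply Complex.continuous_ofReal.comp
    have hacont : Continuous a := by
      rw [ha]
      exact (continuous_const.mul continuous_norm).add (continuous_const.inner continuous_id)
    exact (continuous_const.mul (hacont.sub hbcont)).sub continuous_const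
  have hGint : IntegrableOn G B := ContinuousOn.integrableOn_compact hBcompact hGcont.continuousOn
  have hreint : IntegrableOn (fun ξ => (G ξ).re) B :=
    ContinuousOn.integrableOn_compact hBcompact (Complex.continuous_re.comp hGcont).continuousOn
  have step1 : Real.sqrt V / 2 ≤ ∫ ξ in B, (G ξ).re := by
    have hmono : (∫ ξ in B, (c₀/2 : ℝ)) ≤ ∫ ξ in B, (G ξ).re := by
      apply setIntegral_mono_on (integrableOn_const hVfin.ne) hreint hBmeas
      intro ξ hξ
      have hGre : (G ξ).re = c₀ * Real.cos (2*π*(a ξ - b ξ) - μ₁) := by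
        rw [hG]
        simp only [Complex.re_ofReal_mul, Complex.exp_ofReal_mul_I_re]
      rw [hGre]
      nlinarith [hcosb ξ hξ, hc₀pos]
    have hconst : (∫ ξ in B, (c₀/2 : ℝ)) = V * (c₀/2) := by
      rw [setIntegral_const, smul_eq_mul, Measure.real, hVdef]
    have hval : V * (c₀/2) = Real.sqrt V / 2 := by
      rw [hc₀def]
      have hs : Real.sqrt V * Real.sqrt V = V := Real.mul_self_sqrt hVpos.le
      have hspos : 0 < Real.sqrt V := Real.sqrt_pos.2 hVpos
      field_simp
      nlinarith [hs]
    linarith [hconst ▸ hmono, hval ▸ (hconst ▸ hmono)]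
  have step2 : (∫ ξ in B, (G ξ).re) = (∫ ξ in B, G ξ).re := by
    have := integral_re (μ := volume.restrict B) hGint
    simpa using this
  have step3 : (∫ ξ in B, G ξ) = Complex.exp (((-μ₁:ℝ):ℂ)*Complex.I) *
      ∫ ξ, fp ξ * Complex.exp (2*π*Complex.I*((a ξ : ℝ):ℂ)) := by
    rw [← integral_indicator hBmeas, ← hFeq, integral_const_mul]
  calc Real.sqrt V / 2 ≤ ∫ ξ in B, (G ξ).re := step1
    _ = (∫ ξ in B, G ξ).re := step2
    _ ≤ ‖∫ ξ in B, G ξ‖ := by exact Complex.re_le_norm _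
    _ = ‖wave n fp 0 (t, x)‖ := by
        rw [hW, step3, norm_mul, Complex.norm_exp_ofReal_mul_I, one_mul]


end
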